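/- Let K be a number field, S a finite set of places of K containing all archimedean places, 𝒪_S the ring of S-integers, and n ≥ 3. Then for every normal subgroup N of finite index in SL_n(𝒪_S), there exists a nonzero ideal 𝔞 of 𝒪_S such that N contains every elementary matrix e_ij(t) with i ≠ j and t ∈ 𝔞 (and hence N contains the normal subgroup E_n(𝔞) of SL_n(𝒪_S) generated by these elementary matrices). -/

import Mathlib

open IsDedekindDomain NumberField

/-- The elementary matrix `e_ij(t)`: the identity matrix with an extra entry `t` in position
`(i, j)` (where `i ≠ j`), as an element of `SL_n(R)`. -/
def elemMatrix {n : ℕ} {R : Type*} [CommRing R] (i j : Fin n) (hij : i ≠ j) (t : R) :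
    Matrix.SpecialLinearGroup (Fin n) R :=
  ⟨Matrix.transvection i j t, Matrix.det_transvection_of_ne i j hij t⟩

/-- Over the ring `𝒪_S` of `S`-integers of a number field `K` and `n ≥ 3`: every normal
subgroup `N` of finite index in `SL_n(𝒪_S)` contains all elementary matrices `e_ij(t)` with
`t` in some nonzero ideal `𝔞` of `𝒪_S` (hence contains the normal subgroup `E_n(𝔞)` they
generate). -/

lemma elemMatrix_pow {n : ℕ} {R : Type*} [CommRing R] (i j : Fin n) (hij : i ≠ j) (t : R)
    (k : ℕ) : elemMatrix i j hij t ^ k = elemMatrix i j hij (k * t) := by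
  induction k with
  | zero =>
    rw [pow_zero]
    ext
    simp [elemMatrix, Matrix.transvection]
  | succ k ih =>
    rw [pow_succ, ih]
    ext
    show (Matrix.transvection i j (↑k * t) * Matrix.transvection i j t) _ _ = Matrix.transvection i j (↑(k + 1) * t) _ _
    rw [Matrix.transvection_mul_transvection_same _ _ hij]
    congr 1
    push_cast
    ring

theorem normal_subgroup_contains_elementary_of_ideal
    (K : Type*) [Field K] [NumberField K]
    (S : Finset (HeightOneSpectrum (𝓞 K)))
    (n : ℕ) (hn : 3 ≤ n)
    (N : Subgroup (Matrix.SpecialLinearGroup (Fin n)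
      ((S : Set (HeightOneSpectrum (𝓞 K))).integer K)))
    (hNnormal : N.Normal) (hNindex : N.FiniteIndex) :
    ∃ 𝔞 : Ideal ((S : Set (HeightOneSpectrum (𝓞 K))).integer K), 𝔞 ≠ ⊥ ∧
      ∀ (i j : Fin n) (hij : i ≠ j), ∀ t ∈ 𝔞, elemMatrix i j hij t ∈ N := by
  refine ⟨Ideal.span {(N.index : ((S : Set (HeightOneSpectrum (𝓞 K))).integer K))}, ?_, ?_⟩
  · rw [Ne, Ideal.span_singleton_eq_bot]
    exact_mod_cast hNindex.index_ne_zero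
  · intro i j hij t ht
    rw [Ideal.mem_span_singleton] at ht
    obtain ⟨c, rfl⟩ := ht
    rw [show ((N.index : ((S : Set (HeightOneSpectrum (𝓞 K))).integer K)) * c)
      = (N.index : ℕ) * c by push_cast; ring, ← elemMatrix_pow i j hij c N.index]
    exact N.pow_index_mem _
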